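/- Let s ≥ 2, let [m] = R_1 ⊔ ⋯ ⊔ R_s and [n] = C_1 ⊔ ⋯ ⊔ C_s be partitions into nonempty parts, and let S = ⋃_{k=1}^s (R_k × C_k). Let M be a partial matrix subordinate to S with all specified entries positive such that for each k the submatrix (m_{ij})_{(i,j) ∈ R_k×C_k} has rank one, and set b_k = ∑_{(i,j) ∈ R_k×C_k} m_{ij}. Then M is completable to a rank-one matrix in the standard simplex Δ^{mn−1} if and only if ∑_{k=1}^s √(b_k) ≤ 1. -/

import Mathlib

open Finset

/-- Any 2×2 minor of a matrix of rank at most one vanishes. -/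
private lemma minor_of_rank_le_one {α β : Type*} [Fintype α] [Fintype β] [DecidableEq β]
    (A : Matrix α β ℝ) (h : A.rank ≤ 1) (i i' : α) (j j' : β) :
    A i j * A i' j' = A i' j * A i j' := by
  by_contra hne
  set v : α → ℝ := fun i => A i j with hv
  set w : α → ℝ := fun i => A i j' with hw
  have hvr : v ∈ LinearMap.range A.mulVecLin :=
    ⟨Pi.single j 1, by ext i'; simp [Matrix.mulVecLin_apply, hv]⟩
  have hwr : w ∈ LinearMap.range A.mulVecLin :=
    ⟨Pi.single j' 1, by ext i'; simp [Matrix.mulVecLin_apply, hw]⟩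
  have hli : LinearIndependent ℝ ![v, w] := by
    rw [LinearIndependent.pair_iff]
    intro s t hst
    have h1 : s * A i j + t * A i j' = 0 := by
      have := congrFun hst i
      simpa [hv, hw] using this
    have h2 : s * A i' j + t * A i' j' = 0 := by
      have := congrFun hst i'
      simpa [hv, hw] using this
    have hD : A i j * A i' j' - A i' j * A i j' ≠ 0 := sub_ne_zero.mpr hne
    constructor
    · have hs' : s * (A i j * A i' j' - A i' j * A i j') = 0 := by
        linear_combination A i' j' * h1 - A i j' * h2
      exact (mul_eq_zero.mp hs').resolve_right hD
    · have ht' : t * (A i j * A i' j' - A i' j * A i j') = 0 := by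
        linear_combination A i j * h2 - A i' j * h1
      exact (mul_eq_zero.mp ht').resolve_right hD
  have hspan : Submodule.span ℝ (Set.range ![v, w]) ≤ LinearMap.range A.mulVecLin := by
    rw [Submodule.span_le]
    rintro x ⟨k, rfl⟩
    fin_cases k
    · exact hvr
    · exact hwr
  have h2le : 2 ≤ A.rank := by
    have hmono := Submodule.finrank_mono hspan
    rw [finrank_span_eq_card hli] at hmono
    simp at hmono; exact hmono
  omega

/-- A positive outer-product matrix has rank one. -/
private lemma rank_outer_eq_one {α β : Type*} [Fintype α] [Fintype β] [DecidableEq α]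
    [DecidableEq β] (x : α → ℝ) (y : β → ℝ) (hx : ∀ i, 0 < x i) (hy : ∀ j, 0 < y j)
    (i₀ : α) (j₀ : β) :
    (Matrix.of fun i j => x i * y j).rank = 1 := by
  set A : Matrix α β ℝ := Matrix.of fun i j => x i * y j with hA
  have hle : A.rank ≤ 1 := by
    have hrange : LinearMap.range A.mulVecLin ≤ Submodule.span ℝ {x} := by
      rintro _ ⟨v, rfl⟩
      have hcalc : A.mulVecLin v = (∑ j, y j * v j) • x := by
        ext i
        simp only [Matrix.mulVecLin_apply, Matrix.mulVec, dotProduct, Matrix.of_apply,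
          Pi.smul_apply, smul_eq_mul, hA]
        rw [Finset.sum_mul]
        exact Finset.sum_congr rfl fun j _ => by ring
      rw [hcalc]
      exact Submodule.smul_mem _ _ (Submodule.mem_span_singleton_self x)
    have hxne : x ≠ 0 := fun h => (hx i₀).ne' (congrFun h i₀)
    calc A.rank ≤ Module.finrank ℝ (Submodule.span ℝ ({x} : Set (α → ℝ))) :=
          Submodule.finrank_mono hrange
      _ = 1 := finrank_span_singleton hxne
  have hne : A.rank ≠ 0 := by
    intro h0
    have hbot : LinearMap.range A.mulVecLin = ⊥ := Submodule.finrank_eq_zero.mp h0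
    have hz : A.mulVecLin (Pi.single j₀ 1) = 0 := by
      have : A.mulVecLin (Pi.single j₀ 1) ∈ (⊥ : Submodule ℝ (α → ℝ)) := by
        rw [← hbot]; exact ⟨_, rfl⟩
      simpa using this
    have := congrFun hz i₀
    simp only [Matrix.mulVecLin_apply, Matrix.mulVec_single_one, Matrix.col_apply, mul_one, Pi.zero_apply, hA,
      Matrix.of_apply] at this
    exact absurd this (mul_pos (hx i₀) (hy j₀)).ne'
  omega

/-- Summing a partition fiberwise. -/
private lemma sum_partition {ι : Type*} [Fintype ι] [DecidableEq ι] {s : ℕ}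
    (P : Fin s → Finset ι) (hdisj : ∀ k l, k ≠ l → Disjoint (P k) (P l))
    (hcover : ∀ i, ∃ k, i ∈ P k) (g : ι → ℝ) :
    ∑ k, ∑ i ∈ P k, g i = ∑ i, g i := by
  rw [← Finset.sum_biUnion (fun k _ l _ hkl => hdisj k l hkl)]
  apply Finset.sum_congr _ fun _ _ => rfl
  ext i
  simpa using hcover i

/-- Given positive weights with `∑ w ≤ 1`, and at least two of them, one can scale the
weights so that `(∑ t k * w k) * (∑ w k / t k) = 1`. -/
private lemma exists_scaling {s : ℕ} (hs : 2 ≤ s) (w : Fin s → ℝ) (hw : ∀ k, 0 < w k)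
    (h1 : ∑ k, w k ≤ 1) :
    ∃ t : Fin s → ℝ, (∀ k, 0 < t k) ∧ (∑ k, t k * w k) * (∑ k, w k / t k) = 1 := by
  have hs0 : 0 < s := by omega
  set k0 : Fin s := ⟨0, by omega⟩ with hk0
  set k1 : Fin s := ⟨1, by omega⟩ with hk1
  set σ : ℝ := ∑ k, w k with hσdef
  have hk10 : k1 ≠ k0 := by simp [hk0, hk1]
  have herase : ∑ k ∈ Finset.univ.erase k0, w k = σ - w k0 := by
    have := Finset.add_sum_erase Finset.univ w (Finset.mem_univ k0)
    linarith
  have hS' : 0 < σ - w k0 := by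
    rw [← herase]
    exact Finset.sum_pos (fun k _ => hw k) ⟨k1, Finset.mem_erase.mpr ⟨hk10, Finset.mem_univ _⟩⟩
  have hσpos : 0 < σ :=
    Finset.sum_pos (fun k _ => hw k) ⟨k0, Finset.mem_univ _⟩
  set S' : ℝ := σ - w k0 with hS'def
  set g : ℝ → ℝ := fun r => (r * w k0 + S') * (w k0 / r + S') with hg
  set Rbig : ℝ := 1 + 1 / (w k0 * S') with hRbig
  have hwS : 0 < w k0 * S' := mul_pos (hw k0) hS'
  have hR1 : (1 : ℝ) ≤ Rbig := by
    rw [hRbig]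
    have : 0 < 1 / (w k0 * S') := by positivity
    linarith
  have hRpos : (0 : ℝ) < Rbig := lt_of_lt_of_le one_pos hR1
  have hg1 : g 1 ≤ 1 := by
    have : g 1 = σ * σ := by
      rw [hg]
      simp only [one_mul, div_one]
      rw [hS'def]; ring
    rw [this]
    nlinarith
  have hgR : 1 ≤ g Rbig := by
    have hkey : Rbig * w k0 * S' = 1 + w k0 * S' := by
      rw [hRbig]
      field_simp
      rw [mul_add, mul_one_div_cancel (hw k0).ne']; ring
    have h2 : 0 < w k0 / Rbig := div_pos (hw k0) hRpos
    have h3 : g Rbig = (Rbig * w k0 + S') * (w k0 / Rbig + S') := rfl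
    rw [h3]
    have hb1 : 1 ≤ Rbig * w k0 * S' := by nlinarith [hwS]
    have hb2 : Rbig * w k0 * S' ≤ (Rbig * w k0 + S') * (w k0 / Rbig + S') := by
      nlinarith [mul_nonneg (mul_pos hRpos (hw k0)).le h2.le, mul_nonneg hS'.le h2.le,
        mul_nonneg hS'.le hS'.le]
    exact le_trans hb1 hb2
  have hcont : ContinuousOn g (Set.Icc 1 Rbig) := by
    apply ContinuousOn.mul
    · exact (continuousOn_id.mul continuousOn_const).add continuousOn_const
    · apply ContinuousOn.add _ continuousOn_const
      exact ContinuousOn.div continuousOn_const continuousOn_id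
        (fun x hx => ne_of_gt (lt_of_lt_of_le one_pos hx.1))
  have hmem : (1 : ℝ) ∈ Set.Icc (g 1) (g Rbig) := ⟨hg1, hgR⟩
  obtain ⟨r, hrmem, hgr⟩ := intermediate_value_Icc hR1 hcont hmem
  have hrpos : 0 < r := lt_of_lt_of_le one_pos hrmem.1
  refine ⟨fun k => if k = k0 then r else 1, fun k => by dsimp; split <;> [exact hrpos; exact one_pos], ?_⟩
  have hA : ∑ k, (if k = k0 then r else 1) * w k = r * w k0 + S' := by
    rw [← Finset.add_sum_erase Finset.univ (fun k => (if k = k0 then r else 1) * w k)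
      (Finset.mem_univ k0)]
    simp only [if_pos rfl]
    congr 1
    rw [← herase]
    exact Finset.sum_congr rfl fun k hk => by
      rw [if_neg (Finset.ne_of_mem_erase hk), one_mul]
  have hB : ∑ k, w k / (if k = k0 then r else 1) = w k0 / r + S' := by
    rw [← Finset.add_sum_erase Finset.univ (fun k => w k / (if k = k0 then r else 1))
      (Finset.mem_univ k0)]
    simp only [if_pos rfl]
    congr 1
    rw [← herase]
    exact Finset.sum_congr rfl fun k hk => by
      rw [if_neg (Finset.ne_of_mem_erase hk), div_one]
  rw [hA, hB]
  exact hgr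

/-- A block-diagonal partial matrix with positive rank-one blocks, with block sums
`bₖ`, is completable to a rank-one matrix in the standard simplex iff `∑ √bₖ ≤ 1`. -/
theorem block_diagonal_completable_iff (m n s : ℕ) (hs : 2 ≤ s)
    (R : Fin s → Finset (Fin m)) (C : Fin s → Finset (Fin n))
    (hRne : ∀ k, (R k).Nonempty) (hCne : ∀ k, (C k).Nonempty)
    (hRdisj : ∀ k l, k ≠ l → Disjoint (R k) (R l))
    (hCdisj : ∀ k l, k ≠ l → Disjoint (C k) (C l))
    (hRcover : ∀ i, ∃ k, i ∈ R k) (hCcover : ∀ j, ∃ k, j ∈ C k)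
    (f : Fin m → Fin n → ℝ)
    (hpos : ∀ k, ∀ i ∈ R k, ∀ j ∈ C k, 0 < f i j)
    (hrank : ∀ k, Matrix.rank
      (Matrix.of fun (i : ↥(R k)) (j : ↥(C k)) => f (i : Fin m) (j : Fin n)) = 1) :
    (∃ M : Matrix (Fin m) (Fin n) ℝ,
      (∀ i j, 0 ≤ M i j) ∧ (∑ i, ∑ j, M i j = 1) ∧ M.rank = 1 ∧
      ∀ k, ∀ i ∈ R k, ∀ j ∈ C k, M i j = f i j) ↔
    ∑ k, Real.sqrt (∑ i ∈ R k, ∑ j ∈ C k, f i j) ≤ 1 := by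
  classical
  set k0 : Fin s := ⟨0, by omega⟩ with hk0def
  choose i₀ hi₀ using hRne
  choose j₀ hj₀ using hCne
  choose kR hkR using hRcover
  choose kC hkC using hCcover
  have hkRu : ∀ k i, i ∈ R k → kR i = k := by
    intro k i hi
    by_contra h
    exact Finset.disjoint_left.mp (hRdisj _ _ h) (hkR i) hi
  have hkCu : ∀ k j, j ∈ C k → kC j = k := by
    intro k j hj
    by_contra h
    exact Finset.disjoint_left.mp (hCdisj _ _ h) (hkC j) hj
  constructor
  · rintro ⟨M, hM0, hMsum, hMrank, hMeq⟩
    have hminor := fun i i' j j' => minor_of_rank_le_one M (le_of_eq hMrank) i i' j j'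
    have hstar : 0 < M (i₀ k0) (j₀ k0) := by
      rw [hMeq k0 _ (hi₀ k0) _ (hj₀ k0)]
      exact hpos k0 _ (hi₀ k0) _ (hj₀ k0)
    set x : Fin m → ℝ := fun i => M i (j₀ k0) with hxdef
    set y : Fin n → ℝ := fun j => M (i₀ k0) j / M (i₀ k0) (j₀ k0) with hydef
    have hxy : ∀ i j, M i j = x i * y j := by
      intro i j
      have h := hminor i (i₀ k0) j (j₀ k0)
      simp only [hxdef, hydef]
      field_simp
      linear_combination h
    have hx0 : ∀ i, 0 ≤ x i := fun i => hM0 i _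
    have hy0 : ∀ j, 0 ≤ y j := fun j => div_nonneg (hM0 _ j) hstar.le
    set a : Fin s → ℝ := fun k => ∑ i ∈ R k, x i with hadef
    set c : Fin s → ℝ := fun k => ∑ j ∈ C k, y j with hcdef
    have ha0 : ∀ k, 0 ≤ a k := fun k => Finset.sum_nonneg fun i _ => hx0 i
    have hc0 : ∀ k, 0 ≤ c k := fun k => Finset.sum_nonneg fun j _ => hy0 j
    have hbk : ∀ k, ∑ i ∈ R k, ∑ j ∈ C k, f i j = a k * c k := by
      intro k
      rw [hadef, hcdef]
      rw [Finset.sum_mul_sum]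
      exact Finset.sum_congr rfl fun i hi => Finset.sum_congr rfl fun j hj => by
        rw [← hMeq k i hi j hj, hxy i j]
    have htot : (∑ k, a k) * (∑ k, c k) = 1 := by
      calc (∑ k, a k) * (∑ k, c k) = (∑ i, x i) * (∑ j, y j) := by
            rw [hadef, hcdef, sum_partition R hRdisj (fun i => ⟨kR i, hkR i⟩) x,
              sum_partition C hCdisj (fun j => ⟨kC j, hkC j⟩) y]
        _ = ∑ i, ∑ j, x i * y j := Finset.sum_mul_sum _ _ _ _
        _ = ∑ i, ∑ j, M i j :=
            Finset.sum_congr rfl fun i _ => Finset.sum_congr rfl fun j _ => (hxy i j).symm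
        _ = 1 := hMsum
    have hcs : (∑ k, Real.sqrt (∑ i ∈ R k, ∑ j ∈ C k, f i j)) ^ 2 ≤
        (∑ k, a k) * (∑ k, c k) := by
      apply Finset.sum_sq_le_sum_mul_sum_of_sq_eq_mul Finset.univ
        (fun k _ => ha0 k) (fun k _ => hc0 k)
      intro k _
      rw [Real.sq_sqrt, hbk k]
      rw [hbk k]
      exact mul_nonneg (ha0 k) (hc0 k)
    rw [htot] at hcs
    have hnn : 0 ≤ ∑ k, Real.sqrt (∑ i ∈ R k, ∑ j ∈ C k, f i j) :=
      Finset.sum_nonneg fun k _ => Real.sqrt_nonneg _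
    nlinarith
  · intro hσ
    have hmin : ∀ k, ∀ i ∈ R k, ∀ j ∈ C k,
        f i j * f (i₀ k) (j₀ k) = f (i₀ k) j * f i (j₀ k) := by
      intro k i hi j hj
      have := minor_of_rank_le_one
        (Matrix.of fun (i : ↥(R k)) (j : ↥(C k)) => f (i : Fin m) (j : Fin n))
        (le_of_eq (hrank k)) ⟨i, hi⟩ ⟨i₀ k, hi₀ k⟩ ⟨j, hj⟩ ⟨j₀ k, hj₀ k⟩
      simpa using this
    set p : Fin m → ℝ := fun i => f i (j₀ (kR i)) with hpdef
    set q : Fin n → ℝ := fun j => f (i₀ (kC j)) j / f (i₀ (kC j)) (j₀ (kC j)) with hqdef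
    have hppos : ∀ i, 0 < p i := fun i => hpos (kR i) i (hkR i) _ (hj₀ _)
    have hqpos : ∀ j, 0 < q j := fun j =>
      div_pos (hpos (kC j) _ (hi₀ _) j (hkC j)) (hpos (kC j) _ (hi₀ _) _ (hj₀ _))
    have hpq : ∀ k, ∀ i ∈ R k, ∀ j ∈ C k, p i * q j = f i j := by
      intro k i hi j hj
      have hki : kR i = k := hkRu k i hi
      have hkj : kC j = k := hkCu k j hj
      have hmm := hmin k i hi j hj
      simp only [hpdef, hqdef, hki, hkj]
      have hne := (hpos k _ (hi₀ k) _ (hj₀ k)).ne'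
      field_simp
      linear_combination -hmm
    set a : Fin s → ℝ := fun k => ∑ i ∈ R k, p i with hadef
    set c : Fin s → ℝ := fun k => ∑ j ∈ C k, q j with hcdef
    have hapos : ∀ k, 0 < a k := fun k => Finset.sum_pos (fun i _ => hppos i) ⟨i₀ k, hi₀ k⟩
    have hcpos : ∀ k, 0 < c k := fun k => Finset.sum_pos (fun j _ => hqpos j) ⟨j₀ k, hj₀ k⟩
    have hbk : ∀ k, (∑ i ∈ R k, ∑ j ∈ C k, f i j) = a k * c k := by
      intro k
      rw [hadef, hcdef, Finset.sum_mul_sum]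
      exact Finset.sum_congr rfl fun i hi => Finset.sum_congr rfl fun j hj =>
        (hpq k i hi j hj).symm
    have hwpos : ∀ k, 0 < Real.sqrt (a k * c k) :=
      fun k => Real.sqrt_pos.mpr (mul_pos (hapos k) (hcpos k))
    have hσw : ∑ k, Real.sqrt (a k * c k) ≤ 1 := by
      refine le_trans (le_of_eq ?_) hσ
      exact Finset.sum_congr rfl fun k _ => by rw [hbk k]
    obtain ⟨t, htpos, htsum⟩ :=
      exists_scaling hs (fun k => Real.sqrt (a k * c k)) hwpos hσw
    -- key sqrt identities
    have hidA : ∀ k, Real.sqrt (c k / a k) * a k = Real.sqrt (a k * c k) := by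
      intro k
      have hane : a k ≠ 0 := (hapos k).ne'
      have h2 : c k / a k * (a k) ^ 2 = a k * c k := by
        field_simp
      rw [← h2, Real.sqrt_mul (div_pos (hcpos k) (hapos k)).le, Real.sqrt_sq (hapos k).le]
    have hsqpos : ∀ k, 0 < Real.sqrt (c k / a k) :=
      fun k => Real.sqrt_pos.mpr (div_pos (hcpos k) (hapos k))
    have hidB : ∀ k, c k / Real.sqrt (c k / a k) = Real.sqrt (a k * c k) := by
      intro k
      have hprod : Real.sqrt (c k / a k) * Real.sqrt (a k * c k) = c k := by
        rw [← Real.sqrt_mul (div_pos (hcpos k) (hapos k)).le]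
        have hane : a k ≠ 0 := (hapos k).ne'
        have h3 : c k / a k * (a k * c k) = (c k) ^ 2 := by
          field_simp
        rw [h3, Real.sqrt_sq (hcpos k).le]
      rw [div_eq_iff (hsqpos k).ne']
      linarith [hprod]
    set u : Fin s → ℝ := fun k => t k * Real.sqrt (c k / a k) with hudef
    have hupos : ∀ k, 0 < u k := fun k => mul_pos (htpos k) (hsqpos k)
    set x : Fin m → ℝ := fun i => u (kR i) * p i with hxdef
    set y : Fin n → ℝ := fun j => q j / u (kC j) with hydef
    have hxpos : ∀ i, 0 < x i := fun i => mul_pos (hupos _) (hppos i)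
    have hypos : ∀ j, 0 < y j := fun j => div_pos (hqpos j) (hupos _)
    have hsx : ∀ k, ∑ i ∈ R k, x i = t k * Real.sqrt (a k * c k) := by
      intro k
      have hstep : ∀ i ∈ R k, x i = u k * p i := by
        intro i hi
        simp only [hxdef, hkRu k i hi]
      rw [Finset.sum_congr rfl hstep, ← Finset.mul_sum]
      show u k * a k = _
      rw [hudef]
      dsimp only
      rw [mul_assoc, hidA k]
    have hsy : ∀ k, ∑ j ∈ C k, y j = Real.sqrt (a k * c k) / t k := by
      intro k
      have hstep : ∀ j ∈ C k, y j = q j / u k := by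
        intro j hj
        simp only [hydef, hkCu k j hj]
      rw [Finset.sum_congr rfl hstep, ← Finset.sum_div]
      show c k / u k = _
      rw [hudef]
      dsimp only
      rw [mul_comm (t k) _, ← div_div, hidB k]
    refine ⟨Matrix.of fun i j => x i * y j, ?_, ?_, ?_, ?_⟩
    · intro i j
      exact (mul_pos (hxpos i) (hypos j)).le
    · calc ∑ i, ∑ j, (Matrix.of fun i j => x i * y j) i j
          = (∑ i, x i) * (∑ j, y j) := by
            rw [Finset.sum_mul_sum]
            rfl
        _ = (∑ k, ∑ i ∈ R k, x i) * (∑ k, ∑ j ∈ C k, y j) := by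
            rw [sum_partition R hRdisj (fun i => ⟨kR i, hkR i⟩) x,
              sum_partition C hCdisj (fun j => ⟨kC j, hkC j⟩) y]
        _ = (∑ k, t k * Real.sqrt (a k * c k)) * (∑ k, Real.sqrt (a k * c k) / t k) := by
            rw [Finset.sum_congr rfl fun k _ => hsx k, Finset.sum_congr rfl fun k _ => hsy k]
        _ = 1 := htsum
    · exact rank_outer_eq_one x y hxpos hypos (i₀ k0) (j₀ k0)
    · intro k i hi j hj
      show x i * y j = f i j
      have hki : kR i = k := hkRu k i hi
      have hkj : kC j = k := hkCu k j hj
      simp only [hxdef, hydef, hki, hkj]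
      calc u k * p i * (q j / u k) = p i * (q j / u k * u k) := by ring
        _ = p i * q j := by rw [div_mul_cancel₀ _ (hupos k).ne']
        _ = f i j := hpq k i hi j hj
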